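/- Let T be a power-bounded operator on a complex Banach space with σ(T) ∩ 𝕋 ⊆ {1}, and suppose ‖(e^{iθ}I − T)⁻¹‖ ≤ C|θ|^{−α} for all 0 < |θ| ≤ π, for some C > 0 and α ≥ 1. Then sup_{|λ|>1} ‖(λI − T)⁻¹(I − T)^α‖ < ∞, where (I − T)^α is the fractional power of the sectorial operator I − T (for integer α, simply the α-th power (I − T)^α). -/

import Mathlib

set_option maxHeartbeats 1000000
open Filter Topology

lemma myGeomUnit {R : Type*} [NormedRing R] [CompleteSpace R] {x : R} {K r : ℝ}
    (hr0 : 0 ≤ r) (hr : r < 1) (hx : ∀ n, ‖x ^ n‖ ≤ K * r ^ n) :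
    ∃ u : Rˣ, (u : R) = 1 - x ∧ ‖((u⁻¹ : Rˣ) : R)‖ ≤ K * (1 - r) ⁻¹ := by
  have hgeo : Summable fun n : ℕ => K * r ^ n :=
    (summable_geometric_of_lt_one hr0 hr).mul_left K
  have hsn : Summable fun n : ℕ => ‖x ^ n‖ :=
    Summable.of_nonneg_of_le (fun n => norm_nonneg _) hx hgeo
  have hs : Summable fun n : ℕ => x ^ n := hsn.of_norm
  have h0 : Tendsto (fun n : ℕ => x ^ n) atTop (𝓝 0) := by
    apply squeeze_zero_norm hx
    simpa using (tendsto_pow_atTop_nhds_zero_of_lt_one hr0 hr).const_mul K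
  have h1 : (∑' n : ℕ, x ^ n) * (1 - x) = 1 := by
    refine tendsto_nhds_unique (hs.hasSum.mul_right (1 - x)).tendsto_sum_nat ?_
    have h : Tendsto (fun n : ℕ => 1 - x ^ n) atTop (𝓝 1) := by
      simpa using tendsto_const_nhds.sub h0
    convert ← h
    rw [← geom_sum_mul_neg, Finset.sum_mul]
  have h2 : (1 - x) * (∑' n : ℕ, x ^ n) = 1 := by
    refine tendsto_nhds_unique (hs.hasSum.mul_left (1 - x)).tendsto_sum_nat ?_
    have h : Tendsto (fun n : ℕ => 1 - x ^ n) atTop (𝓝 1) := by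
      simpa using tendsto_const_nhds.sub h0
    convert ← h
    rw [← mul_neg_geom_sum, Finset.mul_sum]
  refine ⟨⟨1 - x, ∑' n : ℕ, x ^ n, h2, h1⟩, rfl, ?_⟩
  calc ‖((⟨1 - x, ∑' n : ℕ, x ^ n, h2, h1⟩ : Rˣ)⁻¹ : Rˣ).val‖
      = ‖∑' n : ℕ, x ^ n‖ := rfl
    _ ≤ ∑' n : ℕ, ‖x ^ n‖ := norm_tsum_le_tsum_norm hsn
    _ ≤ ∑' n : ℕ, K * r ^ n := hsn.tsum_le_tsum hx hgeo
    _ = K * (1 - r)⁻¹ := by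
        rw [tsum_mul_left, tsum_geometric_of_lt_one hr0 hr]

lemma myResUnit {A : Type*} [NormedRing A] [NormedAlgebra ℂ A] [CompleteSpace A]
    (T : A) {K : ℝ} (hK : ∀ n : ℕ, ‖T ^ n‖ ≤ K) {l : ℂ} (hl : 1 < ‖l‖) :
    ∃ u : Aˣ, (u : A) = algebraMap ℂ A l - T ∧ ‖((u⁻¹ : Aˣ) : A)‖ ≤ K / (‖l‖ - 1) := by
  have hl0 : l ≠ 0 := by
    intro h; rw [h, norm_zero] at hl; linarith
  have hln : (0:ℝ) < ‖l‖ := by linarith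
  set x := l⁻¹ • T with hxdef
  have hx : ∀ n : ℕ, ‖x ^ n‖ ≤ K * (‖l‖⁻¹) ^ n := by
    intro n
    rw [hxdef, smul_pow, norm_smul, norm_pow, norm_inv]
    rw [mul_comm K]
    exact mul_le_mul_of_nonneg_left (hK n) (by positivity)
  obtain ⟨u, hu, hub⟩ := myGeomUnit (by positivity) (inv_lt_one_of_one_lt₀ hl) hx
  have key : algebraMap ℂ A l - T = l • (u : A) := by
    rw [hu, hxdef, smul_sub, smul_smul, mul_inv_cancel₀ hl0, one_smul,
      Algebra.algebraMap_eq_smul_one]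
  refine ⟨⟨algebraMap ℂ A l - T, l⁻¹ • ((u⁻¹ : Aˣ) : A), ?_, ?_⟩, rfl, ?_⟩
  · rw [key, smul_mul_assoc, mul_smul_comm, smul_smul, mul_inv_cancel₀ hl0, one_smul,
      u.mul_inv]
  · rw [key, smul_mul_assoc, mul_smul_comm, smul_smul, inv_mul_cancel₀ hl0, one_smul,
      u.inv_mul]
  · show ‖l⁻¹ • ((u⁻¹ : Aˣ) : A)‖ ≤ K / (‖l‖ - 1)
    rw [norm_smul, norm_inv]
    calc ‖l‖⁻¹ * ‖((u⁻¹ : Aˣ) : A)‖ ≤ ‖l‖⁻¹ * (K * (1 - ‖l‖⁻¹)⁻¹) := by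
          exact mul_le_mul_of_nonneg_left hub (by positivity)
      _ = K / (‖l‖ - 1) := by
          rw [div_eq_mul_inv]
          rw [mul_comm (‖l‖)⁻¹, mul_assoc]
          congr 1
          rw [← mul_inv]
          congr 1
          rw [sub_mul, one_mul, inv_mul_cancel₀ (ne_of_gt hln)]

lemma myExpBound (θ : ℝ) : ‖Complex.exp (θ * Complex.I) - 1‖ ≤ |θ| := by
  have hc : 1 - θ ^ 2 / 2 ≤ Real.cos θ := Real.one_sub_sq_div_two_le_cos
  have hsq : ‖Complex.exp (θ * Complex.I) - 1‖ ^ 2 = 2 - 2 * Real.cos θ := by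
    rw [Complex.sq_norm, Complex.normSq_apply, Complex.sub_re,
      Complex.sub_im, Complex.one_re, Complex.one_im, Complex.exp_ofReal_mul_I_re,
      Complex.exp_ofReal_mul_I_im]
    have := Real.sin_sq_add_cos_sq θ
    nlinarith
  nlinarith [norm_nonneg (Complex.exp (θ * Complex.I) - 1), abs_nonneg θ, sq_abs θ,
    sq_nonneg (‖Complex.exp (θ * Complex.I) - 1‖ + |θ|)]

lemma myResId {R : Type*} [Ring R] (A B : R) (hA : IsUnit A) (hB : IsUnit B) :
    Ring.inverse A = Ring.inverse B + Ring.inverse A * (B - A) * Ring.inverse B := by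
  have h1 : Ring.inverse A * (B - A) * Ring.inverse B
      = Ring.inverse A * (B * Ring.inverse B) - Ring.inverse A * A * Ring.inverse B := by
    rw [mul_sub, sub_mul, mul_assoc]
  rw [h1, Ring.mul_inverse_cancel _ hB, Ring.inverse_mul_cancel _ hA, mul_one, one_mul]
  abel

lemma myPowNorm {R : Type*} [NormedRing R] (h1 : ‖(1 : R)‖ ≤ 1) (y : R) {d : ℝ}
    (hy : ‖y‖ ≤ d) : ∀ n : ℕ, ‖y ^ n‖ ≤ d ^ n := by
  have hd : 0 ≤ d := le_trans (norm_nonneg y) hy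
  intro n
  induction n with
  | zero => simpa using h1
  | succ n ih =>
      rw [pow_succ, pow_succ]
      exact le_trans (norm_mul_le _ _) (mul_le_mul ih hy (norm_nonneg _) (by positivity))

theorem stmt17 {X : Type*} [NormedAddCommGroup X] [NormedSpace ℂ X] [CompleteSpace X]
    (T : X →L[ℂ] X) (hpb : ∃ K : ℝ, ∀ n : ℕ, ‖T ^ n‖ ≤ K)
    (hspec : ∀ z ∈ spectrum ℂ T, ‖z‖ = 1 → z = 1)
    (α : ℕ) (hα : 1 ≤ α) (C : ℝ) (hC : 0 < C)
    (hres : ∀ θ : ℝ, θ ≠ 0 → |θ| ≤ Real.pi →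
      Complex.exp (θ * Complex.I) ∈ resolventSet ℂ T ∧
        ‖Ring.inverse (algebraMap ℂ (X →L[ℂ] X) (Complex.exp (θ * Complex.I)) - T)‖ ≤
          C / |θ| ^ α) :
    ∃ M : ℝ, ∀ l : ℂ, 1 < ‖l‖ →
      ‖Ring.inverse (algebraMap ℂ (X →L[ℂ] X) l - T) * (1 - T) ^ α‖ ≤ M := by
  classical
  obtain ⟨K₀, hK₀⟩ := hpb
  set K := max K₀ 1 with hKdef
  have hK1 : (1:ℝ) ≤ K := le_max_right _ _
  have hK0 : (0:ℝ) ≤ K := by linarith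
  have hK : ∀ n : ℕ, ‖T ^ n‖ ≤ K := fun n => le_trans (hK₀ n) (le_max_left _ _)
  set c : ℝ := max ‖(1 : X →L[ℂ] X) - T‖ 3 with hcdef
  have hc3 : (3:ℝ) ≤ c := le_max_right _ _
  have hc0 : (0:ℝ) ≤ c := by linarith
  refine ⟨K * ‖((1 : X →L[ℂ] X) - T) ^ α‖ + (2 ^ α * K + 2 ^ α * ((1 + K) * C))
    + (α : ℝ) * c ^ (α - 1), ?_⟩
  intro l hl
  have hone : ‖(1 : X →L[ℂ] X)‖ ≤ 1 := by
    rw [ContinuousLinearMap.one_def]; exact ContinuousLinearMap.norm_id_le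
  obtain ⟨u, hu, hub⟩ := myResUnit T hK hl
  have hA : IsUnit (algebraMap ℂ (X →L[ℂ] X) l - T) := ⟨u, hu⟩
  have hRAeq : Ring.inverse (algebraMap ℂ (X →L[ℂ] X) l - T) = ((u⁻¹ : _ˣ) : X →L[ℂ] X) := by
    rw [← hu, Ring.inverse_unit]
  set RA := Ring.inverse (algebraMap ℂ (X →L[ℂ] X) l - T) with hRAdef
  have hRAb : ‖RA‖ ≤ K / (‖l‖ - 1) := by rw [hRAeq]; exact hub
  have hr1 : (0:ℝ) < ‖l‖ - 1 := by linarith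
  have nn2 : (0:ℝ) ≤ 2 ^ α * K + 2 ^ α * ((1 + K) * C) := by positivity
  have nnQ : (0:ℝ) ≤ (α : ℝ) * c ^ (α - 1) := by positivity
  have nn1 : (0:ℝ) ≤ K * ‖((1 : X →L[ℂ] X) - T) ^ α‖ := by positivity
  rcases le_or_gt 2 ‖l‖ with hge | hlt
  · -- |l| ≥ 2 : direct bound
    have h2 : ‖RA‖ ≤ K := le_trans hRAb (div_le_self hK0 (by linarith))
    have h1 : ‖RA * (1 - T) ^ α‖ ≤ K * ‖((1 : X →L[ℂ] X) - T) ^ α‖ :=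
      le_trans (norm_mul_le _ _)
        (mul_le_mul_of_nonneg_right h2 (norm_nonneg _))
    linarith
  · -- 1 < |l| < 2
    set a : X →L[ℂ] X := 1 - T with hadef
    set b : X →L[ℂ] X := algebraMap ℂ (X →L[ℂ] X) (1 - l) with hbdef
    have hab : Commute a b := (Algebra.commutes (1 - l) a).symm
    have habdiff : a - b = algebraMap ℂ (X →L[ℂ] X) l - T := by
      rw [hadef, hbdef, map_sub, map_one]; abel
    set Q : X →L[ℂ] X := ∑ i ∈ Finset.range α, a ^ i * b ^ (α - 1 - i) with hQdef
    have hfac : (algebraMap ℂ (X →L[ℂ] X) l - T) * Q = a ^ α - b ^ α := by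
      rw [hQdef, ← habdiff]; exact hab.mul_geom_sum₂ α
    have hmain : RA * a ^ α = RA * b ^ α + Q := by
      have h : a ^ α = b ^ α + (algebraMap ℂ (X →L[ℂ] X) l - T) * Q := by
        rw [hfac]; abel
      rw [h, mul_add, ← mul_assoc, hRAdef, Ring.inverse_mul_cancel _ hA, one_mul]
    have hbn : ‖b‖ ≤ ‖(1:ℂ) - l‖ := by
      rw [hbdef, Algebra.algebraMap_eq_smul_one, norm_smul]
      calc ‖(1:ℂ) - l‖ * ‖(1 : X →L[ℂ] X)‖ ≤ ‖(1:ℂ) - l‖ * 1 :=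
            mul_le_mul_of_nonneg_left hone (norm_nonneg _)
        _ = ‖(1:ℂ) - l‖ := mul_one _
    have h1l3 : ‖(1:ℂ) - l‖ ≤ 3 := by
      calc ‖(1:ℂ) - l‖ ≤ ‖(1:ℂ)‖ + ‖l‖ := norm_sub_le _ _
        _ ≤ 3 := by rw [norm_one]; linarith
    have hbc : ‖b‖ ≤ c := le_trans hbn (le_trans h1l3 hc3)
    have hac : ‖a‖ ≤ c := by rw [hcdef]; exact le_max_left _ _
    have hQn : ‖Q‖ ≤ (α : ℝ) * c ^ (α - 1) := by
      have hterm : ∀ i ∈ Finset.range α, ‖a ^ i * b ^ (α - 1 - i)‖ ≤ c ^ (α - 1) := by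
        intro i hi
        have hi' : i + (α - 1 - i) = α - 1 := by
          have := Finset.mem_range.mp hi; omega
        calc ‖a ^ i * b ^ (α - 1 - i)‖ ≤ ‖a ^ i‖ * ‖b ^ (α - 1 - i)‖ := norm_mul_le _ _
          _ ≤ c ^ i * c ^ (α - 1 - i) :=
              mul_le_mul (myPowNorm hone a hac i) (myPowNorm hone b hbc _)
                (norm_nonneg _) (by positivity)
          _ = c ^ (α - 1) := by rw [← pow_add, hi']
      calc ‖Q‖ ≤ ∑ i ∈ Finset.range α, ‖a ^ i * b ^ (α - 1 - i)‖ := norm_sum_le _ _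
        _ ≤ ∑ _i ∈ Finset.range α, c ^ (α - 1) := Finset.sum_le_sum hterm
        _ = (α : ℝ) * c ^ (α - 1) := by
            rw [Finset.sum_const, Finset.card_range, nsmul_eq_mul]
    -- geometry of l
    set θ := l.arg with hθdef
    have hθpi : |θ| ≤ Real.pi := Complex.abs_arg_le_pi l
    set μ := Complex.exp ((θ : ℂ) * Complex.I) with hμdef
    have hμnorm : ‖μ‖ = 1 := by
      rw [hμdef]; exact Complex.norm_exp_ofReal_mul_I θ
    have hlμ : ‖l - μ‖ = ‖l‖ - 1 := by
      have h := Complex.norm_mul_exp_arg_mul_I l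
      have h2 : l - μ = ((‖l‖ : ℂ) - 1) * μ := by
        rw [sub_one_mul, hμdef, hθdef, h]
      rw [h2, norm_mul, hμnorm, mul_one,
        show ((‖l‖ : ℂ) - 1) = ((‖l‖ - 1 : ℝ) : ℂ) by push_cast; ring,
        Complex.norm_real, Real.norm_eq_abs, abs_of_pos hr1]
    have hμone : ‖μ - 1‖ ≤ |θ| := myExpBound θ
    have h1lbound : ‖(1:ℂ) - l‖ ≤ (‖l‖ - 1) + |θ| := by
      rw [norm_sub_rev]
      have htri : ‖l - 1‖ ≤ ‖l - μ‖ + ‖μ - 1‖ := by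
        have := dist_triangle l μ 1
        simpa [dist_eq_norm] using this
      rw [hlμ] at htri
      linarith
    have hkey : ‖(1:ℂ) - l‖ ^ α * ‖RA‖ ≤ 2 ^ α * K + 2 ^ α * ((1 + K) * C) := by
      rcases le_or_gt |θ| (‖l‖ - 1) with hcase | hcase
      · -- case A
        have h2r : ‖(1:ℂ) - l‖ ≤ 2 * (‖l‖ - 1) := by linarith
        have hstep : (‖l‖ - 1) ^ α * (K / (‖l‖ - 1)) ≤ K := by
          have hle1 : (‖l‖ - 1) ≤ 1 := by linarith
          have h1 : (‖l‖ - 1) ^ α ≤ (‖l‖ - 1) := by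
            calc (‖l‖ - 1) ^ α ≤ (‖l‖ - 1) ^ 1 := pow_le_pow_of_le_one hr1.le hle1 hα
              _ = ‖l‖ - 1 := pow_one _
          have h2 : (‖l‖ - 1) ^ α * (K / (‖l‖ - 1)) ≤ (‖l‖ - 1) * (K / (‖l‖ - 1)) :=
            mul_le_mul_of_nonneg_right h1 (by positivity)
          have heq : (‖l‖ - 1) * (K / (‖l‖ - 1)) = K := by
            rw [mul_comm, div_mul_cancel₀ K (ne_of_gt hr1)]
          linarith
        calc ‖(1:ℂ) - l‖ ^ α * ‖RA‖ ≤ (2 * (‖l‖ - 1)) ^ α * (K / (‖l‖ - 1)) :=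
              mul_le_mul (pow_le_pow_left₀ (norm_nonneg _) h2r α) hRAb (norm_nonneg _)
                (by positivity)
          _ = 2 ^ α * ((‖l‖ - 1) ^ α * (K / (‖l‖ - 1))) := by rw [mul_pow]; ring
          _ ≤ 2 ^ α * K := mul_le_mul_of_nonneg_left hstep (by positivity)
          _ ≤ 2 ^ α * K + 2 ^ α * ((1 + K) * C) := le_add_of_nonneg_right (by positivity)
      · -- case B
        have hθ0 : θ ≠ 0 := by
          intro h; rw [h, abs_zero] at hcase; linarith
        obtain ⟨hμres, hRBb⟩ := hres θ hθ0 hθpi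
        have hB : IsUnit (algebraMap ℂ (X →L[ℂ] X) μ - T) := by
          rw [hμdef]; exact spectrum.mem_resolventSet_iff.mp hμres
        set RB := Ring.inverse (algebraMap ℂ (X →L[ℂ] X) μ - T) with hRBdef
        have hRBb' : ‖RB‖ ≤ C / |θ| ^ α := by rw [hRBdef, hμdef]; exact hRBb
        have hid := myResId _ _ hA hB
        rw [← hRAdef, ← hRBdef] at hid
        have hBA : (algebraMap ℂ (X →L[ℂ] X) μ - T) - (algebraMap ℂ (X →L[ℂ] X) l - T)
            = algebraMap ℂ (X →L[ℂ] X) (μ - l) := by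
          rw [map_sub]; abel
        rw [hBA] at hid
        have hBAn : ‖algebraMap ℂ (X →L[ℂ] X) (μ - l)‖ ≤ ‖l‖ - 1 := by
          rw [Algebra.algebraMap_eq_smul_one, norm_smul]
          have hswap : ‖μ - l‖ = ‖l‖ - 1 := by rw [norm_sub_rev]; exact hlμ
          calc ‖μ - l‖ * ‖(1 : X →L[ℂ] X)‖ ≤ ‖μ - l‖ * 1 :=
                mul_le_mul_of_nonneg_left hone (norm_nonneg _)
            _ = ‖l‖ - 1 := by rw [mul_one, hswap]
        have e1 : ‖RA‖ ≤ ‖RB‖ + ‖RA‖ * ‖algebraMap ℂ (X →L[ℂ] X) (μ - l)‖ * ‖RB‖ := by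
          calc ‖RA‖ = ‖RB + RA * algebraMap ℂ (X →L[ℂ] X) (μ - l) * RB‖ := by rw [← hid]
            _ ≤ ‖RB‖ + ‖RA * algebraMap ℂ (X →L[ℂ] X) (μ - l) * RB‖ := norm_add_le _ _
            _ ≤ ‖RB‖ + ‖RA * algebraMap ℂ (X →L[ℂ] X) (μ - l)‖ * ‖RB‖ :=
                add_le_add_right (norm_mul_le _ _) _
            _ ≤ ‖RB‖ + ‖RA‖ * ‖algebraMap ℂ (X →L[ℂ] X) (μ - l)‖ * ‖RB‖ :=
                add_le_add_right (mul_le_mul_of_nonneg_right (norm_mul_le _ _)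
                  (norm_nonneg _)) _
        have e2 : ‖RA‖ * ‖algebraMap ℂ (X →L[ℂ] X) (μ - l)‖ ≤ K := by
          calc ‖RA‖ * ‖algebraMap ℂ (X →L[ℂ] X) (μ - l)‖
              ≤ (K / (‖l‖ - 1)) * (‖l‖ - 1) :=
                mul_le_mul hRAb hBAn (norm_nonneg _) (by positivity)
            _ = K := div_mul_cancel₀ K (ne_of_gt hr1)
        have hRAn : ‖RA‖ ≤ (1 + K) * (C / |θ| ^ α) := by
          have hRBnn : (0:ℝ) ≤ ‖RB‖ := norm_nonneg _
          have e3 : ‖RA‖ * ‖algebraMap ℂ (X →L[ℂ] X) (μ - l)‖ * ‖RB‖ ≤ K * ‖RB‖ :=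
            mul_le_mul_of_nonneg_right e2 hRBnn
          have e4 : (1 + K) * ‖RB‖ = ‖RB‖ + K * ‖RB‖ := by ring
          have e5 : (1 + K) * ‖RB‖ ≤ (1 + K) * (C / |θ| ^ α) :=
            mul_le_mul_of_nonneg_left hRBb' (by linarith)
          linarith
        have h2θ : ‖(1:ℂ) - l‖ ≤ 2 * |θ| := by linarith
        have hθpow : (0:ℝ) < |θ| ^ α := by
          have : (0:ℝ) < |θ| := abs_pos.mpr hθ0
          positivity
        calc ‖(1:ℂ) - l‖ ^ α * ‖RA‖ ≤ (2 * |θ|) ^ α * ((1 + K) * (C / |θ| ^ α)) :=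
              mul_le_mul (pow_le_pow_left₀ (norm_nonneg _) h2θ α) hRAn (norm_nonneg _)
                (by positivity)
          _ = 2 ^ α * ((1 + K) * C) := by
              rw [mul_pow]
              field_simp
          _ ≤ 2 ^ α * K + 2 ^ α * ((1 + K) * C) := le_add_of_nonneg_left (by positivity)
    have hbpow : ‖b ^ α‖ ≤ ‖(1:ℂ) - l‖ ^ α :=
      le_trans (myPowNorm hone b hbn α) le_rfl
    have hfinal : ‖RA * a ^ α‖ ≤ ‖(1:ℂ) - l‖ ^ α * ‖RA‖ + (α : ℝ) * c ^ (α - 1) := by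
      calc ‖RA * a ^ α‖ = ‖RA * b ^ α + Q‖ := by rw [hmain]
        _ ≤ ‖RA * b ^ α‖ + ‖Q‖ := norm_add_le _ _
        _ ≤ ‖RA‖ * ‖b ^ α‖ + ‖Q‖ := add_le_add_left (norm_mul_le _ _) _
        _ ≤ ‖RA‖ * ‖(1:ℂ) - l‖ ^ α + (α : ℝ) * c ^ (α - 1) :=
            add_le_add (mul_le_mul_of_nonneg_left hbpow (norm_nonneg _)) hQn
        _ = ‖(1:ℂ) - l‖ ^ α * ‖RA‖ + (α : ℝ) * c ^ (α - 1) := by ring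
    linarith
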